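/- arXiv:1405.2238 — 2 statements merged into one kernel-verified Lean document; each statement's English description precedes it below -/
import Mathlib

section
/- Every optimal measure on a σ-algebra 𝓑 is essential; consequently it is σ-principal, satisfies the countable chain condition, and is autocontinuous. -/
open scoped ENNReal
open Set Filter MeasureTheory

variable {E : Type*}

/-- `f : E → [0,∞]` is `𝓑`-measurable: `{f > t}` is measurable for every `t`. -/
def Premeasurable [MeasurableSpace E] (f : E → ℝ≥0∞) : Prop :=
  ∀ t : ℝ≥0∞, MeasurableSet {x | t < f x}

/-- A maxitive measure on the σ-algebra of measurable subsets of `E`. -/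
def Maxitive [MeasurableSpace E] (ν : Set E → ℝ≥0∞) : Prop :=
  ν ∅ = 0 ∧ ∀ A B : Set E, MeasurableSet A → MeasurableSet B →
    ν (A ∪ B) = max (ν A) (ν B)

/-- A σ-maxitive measure: a maxitive measure commuting with countable nondecreasing unions. -/
def SigmaMaxitive [MeasurableSpace E] (ν : Set E → ℝ≥0∞) : Prop :=
  Maxitive ν ∧ ∀ B : ℕ → Set E, (∀ n, MeasurableSet (B n)) → Monotone B →
    ν (⋃ n, B n) = ⨆ n, ν (B n)

/-- `N` is `τ`-negligible: it is contained in a measurable set of `τ`-measure zero. -/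
def Negligible [MeasurableSpace E] (τ : Set E → ℝ≥0∞) (N : Set E) : Prop :=
  ∃ B : Set E, MeasurableSet B ∧ N ⊆ B ∧ τ B = 0

/-- The `τ`-essential supremum of `f` over `B`: `inf { t > 0 : B ∩ {f > t} is τ-negligible }`. -/
noncomputable def essSupOn [MeasurableSpace E] (τ : Set E → ℝ≥0∞) (f : E → ℝ≥0∞)
    (B : Set E) : ℝ≥0∞ :=
  sInf {t : ℝ≥0∞ | 0 < t ∧ Negligible τ (B ∩ {x | t < f x})}

/-- `ν ≪ τ`: absolute continuity. -/
def AbsCont [MeasurableSpace E] (ν τ : Set E → ℝ≥0∞) : Prop :=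
  ∀ B : Set E, MeasurableSet B → τ B = 0 → ν B = 0

/-- `ν ⋘ τ`: strong absolute continuity, i.e. `ν` has a measurable relative density
with respect to `τ`. -/
def StrongAbsCont [MeasurableSpace E] (ν τ : Set E → ℝ≥0∞) : Prop :=
  ∃ f : E → ℝ≥0∞, Premeasurable f ∧ ∀ B : Set E, MeasurableSet B → ν B = essSupOn τ f B

/-- `c` is a cardinal density of `ν`: `ν B = sup_{x ∈ B} c x` for every measurable `B`. -/
def IsCardinalDensity [MeasurableSpace E] (ν : Set E → ℝ≥0∞) (c : E → ℝ≥0∞) : Prop :=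
  ∀ B : Set E, MeasurableSet B → ν B = ⨆ x ∈ B, c x

/-- `τ` is essential: there exists a σ-finite σ-additive measure `m` with the same
null measurable sets. -/
def Essential [MeasurableSpace E] (τ : Set E → ℝ≥0∞) : Prop :=
  ∃ m : Measure E, SigmaFinite m ∧ ∀ B : Set E, MeasurableSet B → (0 < τ B ↔ 0 < m B)

/-- A σ-ideal of the σ-algebra of measurable sets. -/
def SigmaIdeal [MeasurableSpace E] (I : Set (Set E)) : Prop :=
  I.Nonempty ∧ (∀ S ∈ I, MeasurableSet S) ∧
  (∀ f : ℕ → Set E, (∀ n, f n ∈ I) → (⋃ n, f n) ∈ I) ∧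
  (∀ B S : Set E, MeasurableSet B → S ∈ I → B ⊆ S → B ∈ I)

/-- `τ` is σ-principal: every σ-ideal has a greatest element modulo `τ`-negligible sets. -/
def SigmaPrincipal [MeasurableSpace E] (τ : Set E → ℝ≥0∞) : Prop :=
  ∀ I : Set (Set E), SigmaIdeal I → ∃ L ∈ I, ∀ S ∈ I, Negligible τ (S \ L)

/-- A pseudo-multiplication on `[0,∞]`. -/
structure PseudoMul where
  op : ℝ≥0∞ → ℝ≥0∞ → ℝ≥0∞
  assoc : ∀ a b c, op (op a b) c = op a (op b c)
  contOn : ContinuousOn (fun q : ℝ≥0∞ × ℝ≥0∞ => op q.1 q.2) (Set.Ioo 0 ⊤ ×ˢ Set.univ)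
  contLeft : ∀ t, ContinuousOn (fun s => op s t) (Set.Ioi 0)
  monoLeft : ∀ t, Monotone fun s => op s t
  monoRight : ∀ s, Monotone (op s)
  one : ℝ≥0∞
  one_op : ∀ t, op one t = t
  eq_zero : ∀ s t, op s t = 0 → s = 0 ∨ t = 0
  zero_op : ∀ t, op 0 t = 0
  op_zero : ∀ t, op t 0 = 0

/-- `t` is `⊙`-finite: `inf_{s > 0} s ⊙ t = 0`. -/
def OdotFinite (p : PseudoMul) (t : ℝ≥0∞) : Prop :=
  (⨅ s ∈ Set.Ioi (0 : ℝ≥0∞), p.op s t) = 0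

/-- The idempotent `⊙`-integral `∫_B f ⊙ dτ = sup_{t ∈ [0,∞)} t ⊙ τ (B ∩ {f > t})`. -/
noncomputable def iInt [MeasurableSpace E] (p : PseudoMul) (τ : Set E → ℝ≥0∞)
    (f : E → ℝ≥0∞) (B : Set E) : ℝ≥0∞ :=
  ⨆ t ∈ Set.Iio (⊤ : ℝ≥0∞), p.op t (τ (B ∩ {x | t < f x}))

/-- `ν ≪_⊙ τ`: `ν B ≤ ∞ ⊙ τ B` for every measurable `B`. -/
def OdotAbsCont [MeasurableSpace E] (p : PseudoMul) (ν τ : Set E → ℝ≥0∞) : Prop :=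
  ∀ B : Set E, MeasurableSet B → ν B ≤ p.op ⊤ (τ B)

/-- `ν` is semi-`⊙`-finite. -/
def SemiOdotFinite [MeasurableSpace E] (p : PseudoMul) (ν : Set E → ℝ≥0∞) : Prop :=
  ∀ B : Set E, MeasurableSet B →
    ν B = ⨆ A ∈ {A : Set E | MeasurableSet A ∧ A ⊆ B ∧ OdotFinite p (ν A)}, ν A

/-- `τ` is σ-`⊙`-finite. -/
def SigmaOdotFinite [MeasurableSpace E] (p : PseudoMul) (τ : Set E → ℝ≥0∞) : Prop :=
  ∃ B : ℕ → Set E, (∀ n, MeasurableSet (B n)) ∧ (⋃ n, B n) = Set.univ ∧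
    ∀ n, OdotFinite p (τ (B n))

/-- Continuity from below. -/
def ContFromBelow [MeasurableSpace E] (ν : Set E → ℝ≥0∞) : Prop :=
  ∀ B : ℕ → Set E, (∀ n, MeasurableSet (B n)) → Monotone B →
    Tendsto (fun n => ν (B n)) atTop (nhds (ν (⋃ n, B n)))

/-- Continuity from above (no finiteness assumption). -/
def ContFromAbove [MeasurableSpace E] (ν : Set E → ℝ≥0∞) : Prop :=
  ∀ B : ℕ → Set E, (∀ n, MeasurableSet (B n)) → Antitone B →
    Tendsto (fun n => ν (B n)) atTop (nhds (ν (⋂ n, B n)))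

/-- An optimal measure: a maxitive measure continuous from below and from above. -/
def Optimal [MeasurableSpace E] (ν : Set E → ℝ≥0∞) : Prop :=
  Maxitive ν ∧ ContFromBelow ν ∧ ContFromAbove ν

/-- `ν` satisfies the countable chain condition: every pairwise disjoint family of
non-`ν`-negligible measurable sets is countable. -/
def CCC [MeasurableSpace E] (ν : Set E → ℝ≥0∞) : Prop :=
  ∀ 𝓐 : Set (Set E), (∀ A ∈ 𝓐, MeasurableSet A ∧ ¬ Negligible ν A) →
    𝓐.Pairwise Disjoint → 𝓐.Countable

section Aux
variable [MeasurableSpace E] {ν : Set E → ℝ≥0∞}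

theorem Maxitive.mono (hm : Maxitive ν) {A B : Set E} (hA : MeasurableSet A)
    (hB : MeasurableSet B) (hAB : A ⊆ B) : ν A ≤ ν B := by
  have h := hm.2 A B hA hB
  rw [Set.union_eq_self_of_subset_left hAB] at h
  rw [h]; exact le_max_left _ _

theorem negligible_iff (hm : Maxitive ν) {B : Set E} (hB : MeasurableSet B) :
    Negligible ν B ↔ ν B = 0 := by
  constructor
  · rintro ⟨N, hN, hBN, hN0⟩
    exact le_antisymm (hN0 ▸ hm.mono hB hN hBN) (zero_le)
  · exact fun h => ⟨B, hB, subset_rfl, h⟩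

theorem nu_iInf (hm : Maxitive ν) (hca : ContFromAbove ν) (B : ℕ → Set E)
    (hB : ∀ n, MeasurableSet (B n)) (hanti : Antitone B) :
    ν (⋂ n, B n) = ⨅ n, ν (B n) :=
  tendsto_nhds_unique (hca B hB hanti)
    (tendsto_atTop_iInf fun i j h => hm.mono (hB j) (hB i) (hanti h))

/-- Attainment: the value of a countable union is attained at a finite stage. -/
theorem nu_attain (hm : Maxitive ν) (hca : ContFromAbove ν) (f : ℕ → Set E)
    (hf : ∀ n, MeasurableSet (f n)) (hpos : 0 < ν (⋃ n, f n)) :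
    ∃ i, ν (⋃ n, f n) ≤ ν (f i) := by
  by_contra hc
  push_neg at hc
  set U := ⋃ n, f n with hU
  have hUm : MeasurableSet U := MeasurableSet.iUnion hf
  have hAccm : ∀ n, MeasurableSet (Set.accumulate f n) :=
    fun n => Set.Finite.measurableSet_biUnion (Set.finite_Iic n) (fun i _ => hf i)
  have hAcc : ∀ n, ν (Set.accumulate f n) < ν U := by
    have hacc0 : Set.accumulate f 0 = f 0 := by
      ext x; simp [Set.mem_accumulate, Nat.le_zero]
    have haccS : ∀ k, Set.accumulate f (k + 1) = Set.accumulate f k ∪ f (k + 1) := by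
      intro k; ext x
      simp only [Set.mem_accumulate, Set.mem_union]
      constructor
      · rintro ⟨y, hy, hxy⟩
        rcases Nat.lt_or_ge y (k+1) with h | h
        · exact Or.inl ⟨y, by omega, hxy⟩
        · exact Or.inr (by rwa [show y = k+1 by omega] at hxy)
      · rintro (⟨y, hy, hxy⟩ | hx)
        · exact ⟨y, by omega, hxy⟩
        · exact ⟨k+1, le_refl _, hx⟩
    intro n
    induction n with
    | zero => rw [hacc0]; exact hc 0
    | succ k ih =>
      rw [haccS k, hm.2 _ _ (hAccm k) (hf (k + 1))]
      exact max_lt ih (hc (k + 1))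
  set G := fun n => U \ Set.accumulate f n with hG
  have hGm : ∀ n, MeasurableSet (G n) := fun n => hUm.diff (hAccm n)
  have hGanti : Antitone G := fun i j h =>
    Set.diff_subset_diff_right (Set.monotone_accumulate h)
  have hGval : ∀ n, ν (G n) = ν U := by
    intro n
    have hsplit : U = Set.accumulate f n ∪ G n := by
      rw [Set.union_diff_cancel]
      intro x hx
      exact Set.mem_iUnion.2 (by
        rcases Set.mem_iUnion₂.1 hx with ⟨i, _, hxi⟩
        exact ⟨i, hxi⟩)
    have := hm.2 _ _ (hAccm n) (hGm n)
    rw [← hsplit] at this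
    rcases max_cases (ν (Set.accumulate f n)) (ν (G n)) with ⟨h1, h2⟩ | ⟨h1, h2⟩
    · exact absurd (this ▸ h1 ▸ (hAcc n)) (lt_irrefl _)
    · rw [this, h1]
  have hGint : ⋂ n, G n = ∅ := by
    ext x
    simp only [Set.mem_iInter, Set.mem_empty_iff_false, iff_false]
    intro h
    rcases Set.mem_iUnion.1 (h 0).1 with ⟨i, hxi⟩
    exact (h i).2 (Set.mem_accumulate.2 ⟨i, le_refl i, hxi⟩)
  have h0 := nu_iInf hm hca G hGm hGanti
  rw [hGint, hm.1] at h0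
  have : (0 : ℝ≥0∞) = ν U := by rw [h0]; simp [hGval]
  exact absurd (this ▸ hpos) (lt_irrefl _)

/-- No infinite pairwise disjoint family of sets of measure ≥ t > 0. -/
theorem nu_tail (hm : Maxitive ν) (hca : ContFromAbove ν) {t : ℝ≥0∞} (ht : 0 < t)
    (C : ℕ → Set E) (hC : ∀ n, MeasurableSet (C n)) (hd : Pairwise (Function.onFun Disjoint C))
    (hν : ∀ n, t ≤ ν (C n)) : False := by
  set G := fun n => ⋃ k, C (n + k) with hG
  have hGm : ∀ n, MeasurableSet (G n) := fun n => MeasurableSet.iUnion fun k => hC _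
  have hGanti : Antitone G := by
    intro i j hij x hx
    rcases Set.mem_iUnion.1 hx with ⟨k, hk⟩
    exact Set.mem_iUnion.2 ⟨j - i + k, by rwa [← Nat.add_assoc, Nat.add_sub_cancel' hij]⟩
  have hGint : ⋂ n, G n = ∅ := by
    ext x
    simp only [Set.mem_iInter, Set.mem_empty_iff_false, iff_false]
    intro h
    rcases Set.mem_iUnion.1 (h 0) with ⟨i, hxi⟩
    rcases Set.mem_iUnion.1 (h (i + 1)) with ⟨j, hxj⟩
    have hne : (0 : ℕ) + i ≠ i + 1 + j := by omega
    exact Set.disjoint_left.1 (hd hne) hxi hxj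
  have h0 := nu_iInf hm hca G hGm hGanti
  rw [hGint, hm.1] at h0
  have h1 : t ≤ 0 := by
    rw [h0]
    exact le_iInf fun n => le_trans (hν n)
      (hm.mono (hC n) (hGm n) (by simpa using Set.subset_iUnion (fun k => C (n + k)) 0))
  exact absurd (lt_of_lt_of_le ht h1) (lt_irrefl _)

end Aux

section Aux2
variable [MeasurableSpace E] {ν : Set E → ℝ≥0∞}

/-- A maximal pairwise disjoint family of sets satisfying `P`. -/
theorem exists_maximal_disjoint (P : Set E → Prop) :
    ∃ 𝓓 : Set (Set E), (∀ A ∈ 𝓓, P A) ∧ 𝓓.Pairwise Disjoint ∧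
      ∀ A, P A → (∀ D ∈ 𝓓, Disjoint A D) → A ∈ 𝓓 := by
  obtain ⟨𝓓, h𝓓⟩ := zorn_subset {𝓕 : Set (Set E) | (∀ A ∈ 𝓕, P A) ∧ 𝓕.Pairwise Disjoint}
    (by
      intro c hc hchain
      refine ⟨⋃₀ c, ⟨?_, ?_⟩, fun s hs => Set.subset_sUnion_of_mem hs⟩
      · rintro A ⟨𝓕, h𝓕, hA⟩
        exact (hc h𝓕).1 A hA
      · rintro A ⟨𝓕, h𝓕, hA⟩ B ⟨𝓖, h𝓖, hB⟩ hAB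
        rcases hchain.total h𝓕 h𝓖 with h | h
        · exact (hc h𝓖).2 (h hA) hB hAB
        · exact (hc h𝓕).2 hA (h hB) hAB)
  refine ⟨𝓓, h𝓓.prop.1, h𝓓.prop.2, fun A hA hdisj => ?_⟩
  by_contra hA𝓓
  have hins : insert A 𝓓 ∈ {𝓕 : Set (Set E) | (∀ A ∈ 𝓕, P A) ∧ 𝓕.Pairwise Disjoint} := by
    constructor
    · rintro B (rfl | hB)
      · exact hA
      · exact h𝓓.prop.1 B hB
    · apply Set.Pairwise.insert h𝓓.prop.2
      intro D hD _
      exact ⟨hdisj D hD, (hdisj D hD).symm⟩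
  have := h𝓓.2 hins (Set.subset_insert A 𝓓)
  exact hA𝓓 (this (Set.mem_insert A 𝓓))

theorem optimal_ccc (hν : Optimal ν) : CCC ν := by
  obtain ⟨hm, _, hca⟩ := hν
  intro 𝓐 h𝓐 hdisj
  have hpos : ∀ A ∈ 𝓐, 0 < ν A := by
    intro A hA
    rcases (h𝓐 A hA) with ⟨hAm, hAneg⟩
    rcases eq_or_lt_of_le ((zero_le : (0:ℝ≥0∞) ≤ ν A)) with h | h
    · exact absurd ((negligible_iff hm hAm).2 h.symm) hAneg
    · exact h
  -- 𝓐 = ⋃ n, {A ∈ 𝓐 | (n+1)⁻¹ ≤ ν A}, each finite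
  have hsub : 𝓐 ⊆ ⋃ n : ℕ, {A ∈ 𝓐 | ((n : ℝ≥0∞) + 1)⁻¹ ≤ ν A} := by
    intro A hA
    obtain ⟨n, hn⟩ := ENNReal.exists_inv_nat_lt (ne_of_gt (hpos A hA))
    refine Set.mem_iUnion.2 ⟨n, hA, le_trans ?_ (le_of_lt hn)⟩
    apply ENNReal.inv_le_inv.2
    exact le_add_right (le_refl _)
  refine Set.Countable.mono hsub (Set.countable_iUnion fun n => ?_)
  -- each level is finite
  by_contra hc
  have hinf : Set.Infinite {A ∈ 𝓐 | ((n : ℝ≥0∞) + 1)⁻¹ ≤ ν A} :=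
    fun h => hc h.countable
  set g := hinf.natEmbedding with hg
  apply nu_tail hm hca (t := ((n : ℝ≥0∞) + 1)⁻¹) (by simp) (fun k => (g k : Set E))
  · exact fun k => (h𝓐 _ (g k).2.1).1
  · intro i j hij
    exact hdisj (g i).2.1 (g j).2.1 (fun h => hij (g.injective (Subtype.ext h)))
  · exact fun k => (g k).2.2

theorem optimal_sigmaPrincipal (hν : Optimal ν) : SigmaPrincipal ν := by
  have hm := hν.1
  intro I hI
  obtain ⟨hIne, hImeas, hIunion, hIdown⟩ := hI
  obtain ⟨𝓓, h𝓓P, h𝓓disj, h𝓓max⟩ := exists_maximal_disjoint (fun A => A ∈ I ∧ 0 < ν A)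
  have h𝓓count : 𝓓.Countable := by
    apply optimal_ccc hν 𝓓 _ h𝓓disj
    intro A hA
    refine ⟨hImeas A (h𝓓P A hA).1, fun hneg => ?_⟩
    rw [negligible_iff hm (hImeas A (h𝓓P A hA).1)] at hneg
    exact absurd (hneg ▸ (h𝓓P A hA).2) (lt_irrefl _)
  -- L = union of 𝓓
  have hLmem : ⋃₀ 𝓓 ∈ I := by
    rcases Set.eq_empty_or_nonempty 𝓓 with h | h
    · rw [h, Set.sUnion_empty]
      obtain ⟨S, hS⟩ := hIne
      exact hIdown ∅ S MeasurableSet.empty hS (Set.empty_subset S)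
    · obtain ⟨f, hf⟩ := (Set.countable_iff_exists_surjective h).1 h𝓓count
      have : ⋃₀ 𝓓 = ⋃ n, (f n : Set E) := by
        ext x
        simp only [Set.mem_sUnion, Set.mem_iUnion]
        constructor
        · rintro ⟨D, hD, hxD⟩
          obtain ⟨n, hn⟩ := hf ⟨D, hD⟩
          exact ⟨n, by rw [hn]; exact hxD⟩
        · rintro ⟨n, hn⟩
          exact ⟨f n, (f n).2, hn⟩
      rw [this]
      exact hIunion _ fun n => (h𝓓P _ (f n).2).1
  refine ⟨⋃₀ 𝓓, hLmem, fun S hS => ?_⟩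
  have hSm : MeasurableSet S := hImeas S hS
  have hLm : MeasurableSet (⋃₀ 𝓓) := hImeas _ hLmem
  have hdm : MeasurableSet (S \ ⋃₀ 𝓓) := hSm.diff hLm
  rw [negligible_iff hm hdm]
  by_contra h0
  have hpos : 0 < ν (S \ ⋃₀ 𝓓) := lt_of_le_of_ne (zero_le) (Ne.symm h0)
  have hmem : S \ ⋃₀ 𝓓 ∈ 𝓓 := by
    apply h𝓓max _ ⟨hIdown _ S hdm hS Set.diff_subset, hpos⟩
    intro D hD
    exact Set.disjoint_left.2 fun x hx hxD => hx.2 ⟨D, hD, hxD⟩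
  have : S \ ⋃₀ 𝓓 ⊆ ⋃₀ 𝓓 := fun x hx => ⟨_, hmem, hx⟩
  have hempty : S \ ⋃₀ 𝓓 = ∅ := by
    ext x; simp only [Set.mem_empty_iff_false, iff_false]
    exact fun hx => hx.2 (this hx)
  rw [hempty, hm.1] at hpos
  exact absurd hpos (lt_irrefl _)

end Aux2

section Atoms
variable [MeasurableSpace E] {ν : Set E → ℝ≥0∞}

/-- A `t`-atom. -/
def NuAtom [MeasurableSpace E] (ν : Set E → ℝ≥0∞) (t : ℝ≥0∞) (A : Set E) : Prop :=
  MeasurableSet A ∧ t ≤ ν A ∧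
    ∀ C : Set E, MeasurableSet C → C ⊆ A → t ≤ ν C → ν (A \ C) < t

theorem exists_atom (hm : Maxitive ν) (hca : ContFromAbove ν) {t : ℝ≥0∞} (ht : 0 < t)
    {B : Set E} (hB : MeasurableSet B) (htB : t ≤ ν B) :
    ∃ A, A ⊆ B ∧ NuAtom ν t A := by
  by_contra hc
  push_neg at hc
  -- every measurable subset of B with ν ≥ t splits
  have hsplit : ∀ R : Set E, MeasurableSet R → R ⊆ B → t ≤ ν R →
      ∃ C, MeasurableSet C ∧ C ⊆ R ∧ t ≤ ν C ∧ t ≤ ν (R \ C) := by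
    intro R hRm hRB hRt
    have := hc R hRB
    unfold NuAtom at this
    push_neg at this
    obtain ⟨C, hCm, hCR, hCt, hRC⟩ := this hRm hRt
    exact ⟨C, hCm, hCR, hCt, hRC⟩
  classical
  -- iterate
  let step : Set E → Set E := fun R =>
    if h : MeasurableSet R ∧ R ⊆ B ∧ t ≤ ν R then (hsplit R h.1 h.2.1 h.2.2).choose else ∅
  let R : ℕ → Set E := fun n => (fun S => S \ step S)^[n] B
  have hRsucc : ∀ n, R (n + 1) = R n \ step (R n) := fun n =>
    Function.iterate_succ_apply' (fun S => S \ step S) n B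
  have hinv : ∀ n, MeasurableSet (R n) ∧ R n ⊆ B ∧ t ≤ ν (R n) := by
    intro n
    induction n with
    | zero => exact ⟨hB, subset_rfl, htB⟩
    | succ k ih =>
      have hd : step (R k) = (hsplit (R k) ih.1 ih.2.1 ih.2.2).choose := by
        simp only [step, dif_pos ih]
      obtain ⟨hCm, hCR, hCt, hRC⟩ := (hsplit (R k) ih.1 ih.2.1 ih.2.2).choose_spec
      rw [hRsucc k, hd]
      exact ⟨ih.1.diff hCm, Set.Subset.trans Set.diff_subset ih.2.1, hRC⟩
  -- the removed pieces
  let C : ℕ → Set E := fun n => step (R n)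
  have hCspec : ∀ n, MeasurableSet (C n) ∧ C n ⊆ R n ∧ t ≤ ν (C n) := by
    intro n
    have ih := hinv n
    have hd : step (R n) = (hsplit (R n) ih.1 ih.2.1 ih.2.2).choose := by
      simp only [step, dif_pos ih]
    obtain ⟨hCm, hCR, hCt, _⟩ := (hsplit (R n) ih.1 ih.2.1 ih.2.2).choose_spec
    have hCn : C n = (hsplit (R n) ih.1 ih.2.1 ih.2.2).choose := hd
    rw [hCn]
    exact ⟨hCm, hCR, hCt⟩
  have hRanti : ∀ m n, m ≤ n → R n ⊆ R m := by
    intro m n hmn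
    induction n with
    | zero => rw [Nat.le_zero.1 hmn]
    | succ k ih =>
      rcases Nat.lt_or_ge m (k+1) with h | h
      · exact Set.Subset.trans (by rw [hRsucc k]; exact Set.diff_subset) (ih (by omega))
      · rw [show m = k+1 by omega]
  apply nu_tail hm hca ht C (fun n => (hCspec n).1) _ (fun n => (hCspec n).2.2)
  have hkey : ∀ i j, i < j → Disjoint (C i) (C j) := by
    intro i j h
    have h1 : C j ⊆ R i \ C i := by
      refine Set.Subset.trans (hCspec j).2.1 (Set.Subset.trans (hRanti (i+1) j h) ?_)
      rw [hRsucc i]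
    exact Set.disjoint_left.2 fun x hx hxj => (h1 hxj).2 hx
  intro i j hij
  rcases Nat.lt_or_ge i j with h | h
  · exact hkey i j h
  · exact (hkey j i (by omega)).symm

/-- Per-atom two-valued countable maxitivity. -/
theorem atom_additive (hm : Maxitive ν) (hca : ContFromAbove ν) {t : ℝ≥0∞} (ht : 0 < t)
    {A : Set E} (hA : NuAtom ν t A) (f : ℕ → Set E) (hf : ∀ n, MeasurableSet (f n))
    (hd : Pairwise (Function.onFun Disjoint f)) :
    (if t ≤ ν (A ∩ ⋃ n, f n) then (1 : ℝ≥0∞) else 0)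
      = ∑' n, (if t ≤ ν (A ∩ f n) then (1 : ℝ≥0∞) else 0) := by
  obtain ⟨hAm, hAt, hAatom⟩ := hA
  have hAfm : ∀ n, MeasurableSet (A ∩ f n) := fun n => hAm.inter (hf n)
  by_cases hU : t ≤ ν (A ∩ ⋃ n, f n)
  · rw [if_pos hU]
    -- at least one n with t ≤ ν (A ∩ f n)
    have hUeq : A ∩ ⋃ n, f n = ⋃ n, A ∩ f n := Set.inter_iUnion _ _
    have hpos : 0 < ν (⋃ n, A ∩ f n) := lt_of_lt_of_le ht (hUeq ▸ hU)
    obtain ⟨i, hi⟩ := nu_attain hm hca _ hAfm hpos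
    have hit : t ≤ ν (A ∩ f i) := le_trans (hUeq ▸ hU) hi
    have hsingle := tsum_eq_single (L := SummationFilter.unconditional ℕ) (f := fun n => if t ≤ ν (A ∩ f n) then (1 : ℝ≥0∞) else 0) i ?_
    · rw [hsingle, if_pos hit]
    intro j hji
    rw [if_neg]
    intro hjt
    -- two disjoint subsets of A with ν ≥ t : contradiction with atom property
    have hsub : A ∩ f j ⊆ A \ (A ∩ f i) := by
      intro x hx
      exact ⟨hx.1, fun hxi => Set.disjoint_left.1 (hd hji) hx.2 hxi.2⟩
    have := hAatom (A ∩ f i) (hAfm i) Set.inter_subset_left hit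
    exact absurd (lt_of_le_of_lt (le_trans hjt
      (hm.mono (hAfm j) (hAm.diff (hAfm i)) hsub)) this) (lt_irrefl _)
  · rw [if_neg hU]
    symm
    rw [ENNReal.tsum_eq_zero]
    intro n
    rw [if_neg]
    intro hn
    exact hU (le_trans hn (hm.mono (hAfm n) (hAm.inter (MeasurableSet.iUnion hf))
      (Set.inter_subset_inter_right A (Set.subset_iUnion f n))))

end Atoms

section Ess
variable [MeasurableSpace E] {ν : Set E → ℝ≥0∞}

/-- The two-valued measure attached to an atom. -/
noncomputable def atomMeasure (hm : Maxitive ν) (hca : ContFromAbove ν) {t : ℝ≥0∞}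
    (ht : 0 < t) {A : Set E} (hA : NuAtom ν t A) (c : ℝ≥0∞) : Measure E :=
  Measure.ofMeasurable (fun B _ => c * if t ≤ ν (A ∩ B) then 1 else 0)
    (by
      simp only [Set.inter_empty, hm.1, if_neg (not_le.2 ht), mul_zero])
    (by
      intro f hf hd
      rw [ENNReal.tsum_mul_left, ← atom_additive hm hca ht hA f hf hd])

theorem atomMeasure_apply (hm : Maxitive ν) (hca : ContFromAbove ν) {t : ℝ≥0∞}
    (ht : 0 < t) {A : Set E} (hA : NuAtom ν t A) (c : ℝ≥0∞) {B : Set E}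
    (hB : MeasurableSet B) :
    atomMeasure hm hca ht hA c B = c * if t ≤ ν (A ∩ B) then 1 else 0 :=
  Measure.ofMeasurable_apply B hB

theorem optimal_essential_aux (hν : Optimal ν) : Essential ν := by
  classical
  obtain ⟨hm, hcb, hca⟩ := hν
  set q : ℕ → ℝ≥0∞ := fun n => ((n : ℝ≥0∞) + 1)⁻¹ with hqdef
  have hq : ∀ n, 0 < q n := fun n => by simp [hqdef]
  -- maximal disjoint families of atoms at each scale
  have h𝓓 := fun n => (exists_maximal_disjoint (E := E) (fun A => NuAtom ν (q n) A)).choose_spec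
  set 𝓓 : ℕ → Set (Set E) :=
    fun n => (exists_maximal_disjoint (E := E) (fun A => NuAtom ν (q n) A)).choose with h𝓓def
  have h𝓓count : ∀ n, (𝓓 n).Countable := by
    intro n
    apply optimal_ccc ⟨hm, hcb, hca⟩ (𝓓 n) _ ((h𝓓 n).2.1)
    intro A hA
    obtain ⟨hAm, hAt, _⟩ := (h𝓓 n).1 A hA
    refine ⟨hAm, fun hneg => ?_⟩
    rw [negligible_iff hm hAm] at hneg
    exact absurd (lt_of_lt_of_le (hq n) hAt) (by rw [hneg]; simp)
  haveI : ∀ n, Countable ↥(𝓓 n) := fun n => (h𝓓count n).to_subtype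
  obtain ⟨enc, henc⟩ := exists_injective_nat ((n : ℕ) × ↥(𝓓 n))
  set w : ((n : ℕ) × ↥(𝓓 n)) → ℝ≥0∞ := fun i => (2⁻¹ : ℝ≥0∞) ^ (enc i) with hwdef
  have hw : ∀ i, 0 < w i := fun i => by
    simp [hwdef]
    exact ENNReal.pow_pos (by norm_num) _
  set μ : ((n : ℕ) × ↥(𝓓 n)) → Measure E :=
    fun i => atomMeasure hm hca (hq i.1) ((h𝓓 i.1).1 i.2.1 i.2.2) (w i) with hμdef
  have hμapply : ∀ i : ((n : ℕ) × ↥(𝓓 n)), ∀ {B : Set E}, MeasurableSet B →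
      μ i B = w i * if q i.1 ≤ ν ((i.2 : Set E) ∩ B) then 1 else 0 :=
    fun i {B} hB => atomMeasure_apply hm hca (hq i.1) ((h𝓓 i.1).1 i.2.1 i.2.2) (w i) hB
  refine ⟨Measure.sum μ, ?_, ?_⟩
  · -- σ-finite (indeed finite)
    have hfin : Measure.sum μ Set.univ ≠ ⊤ := by
      rw [Measure.sum_apply _ MeasurableSet.univ]
      have h1 : ∀ i, μ i Set.univ ≤ w i := by
        intro i
        rw [hμapply i MeasurableSet.univ]
        split
        · rw [mul_one]
        · rw [mul_zero]; exact zero_le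
      have h2 : ∑' i, μ i Set.univ ≤ (1 - 2⁻¹ : ℝ≥0∞)⁻¹ := by
        calc ∑' i, μ i Set.univ ≤ ∑' i, w i := ENNReal.tsum_le_tsum h1
          _ ≤ ∑' n : ℕ, (2⁻¹ : ℝ≥0∞) ^ n :=
            ENNReal.tsum_comp_le_tsum_of_injective henc (fun n => (2⁻¹ : ℝ≥0∞) ^ n)
          _ = (1 - 2⁻¹)⁻¹ := ENNReal.tsum_geometric _
      intro htop
      rw [htop] at h2
      have : (1 - 2⁻¹ : ℝ≥0∞)⁻¹ ≠ ⊤ := by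
        apply ENNReal.inv_ne_top.2
        intro h0
        have : (1 - 2⁻¹ : ℝ≥0∞) = 2⁻¹ := by
          rw [ENNReal.sub_eq_of_eq_add (by norm_num)]
          rw [ENNReal.inv_two_add_inv_two]
        rw [this] at h0
        simp at h0
      exact this (top_le_iff.1 h2)
    haveI : IsFiniteMeasure (Measure.sum μ) := ⟨lt_top_iff_ne_top.2 hfin⟩
    infer_instance
  · intro B hB
    rw [Measure.sum_apply _ hB]
    constructor
    · -- ν B > 0 → m B > 0
      intro hνB
      obtain ⟨n, hn⟩ := ENNReal.exists_inv_nat_lt (ne_of_gt hνB)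
      have hqn : q n < ν B := lt_of_le_of_lt (by
        apply ENNReal.inv_le_inv.2
        exact le_add_right (le_refl _)) hn
      -- find an atom in 𝓓 n meeting B substantially
      have hkey : ∃ A ∈ 𝓓 n, q n ≤ ν (A ∩ B) := by
        by_contra hc
        push_neg at hc
        set L := ⋃₀ 𝓓 n with hLdef
        have hLm : MeasurableSet L :=
          MeasurableSet.sUnion (h𝓓count n) fun A hA => ((h𝓓 n).1 A hA).1
        have hLB : ν (L ∩ B) < q n := by
          rcases Set.eq_empty_or_nonempty (𝓓 n) with he | he
          · rw [hLdef, he]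
            simp [hm.1]
            exact hq n
          · obtain ⟨e, he'⟩ := (Set.countable_iff_exists_surjective he).1 (h𝓓count n)
            have hLeq : L ∩ B = ⋃ k, ((e k : Set E) ∩ B) := by
              ext x
              simp only [hLdef, Set.mem_inter_iff, Set.mem_sUnion, Set.mem_iUnion]
              constructor
              · rintro ⟨⟨D, hD, hxD⟩, hxB⟩
                obtain ⟨k, hk⟩ := he' ⟨D, hD⟩
                exact ⟨k, by rw [hk]; exact hxD, hxB⟩
              · rintro ⟨k, hk, hxB⟩
                exact ⟨⟨e k, (e k).2, hk⟩, hxB⟩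
            rw [hLeq]
            rcases eq_or_lt_of_le ((zero_le : (0:ℝ≥0∞) ≤ ν (⋃ k, ((e k : Set E) ∩ B)))) with h0 | h0
            · rw [← h0]; exact hq n
            · obtain ⟨k, hk⟩ := nu_attain hm hca _
                (fun k => ((h𝓓 n).1 _ (e k).2).1.inter hB) h0
              exact lt_of_le_of_lt hk (hc _ (e k).2)
        have hBsplit : B = (L ∩ B) ∪ (B \ L) := by
          ext x
          simp only [Set.mem_union, Set.mem_inter_iff, Set.mem_diff]
          tauto
        have hmax := hm.2 (L ∩ B) (B \ L) (hLm.inter hB) (hB.diff hLm)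
        rw [← hBsplit] at hmax
        have hBL : q n ≤ ν (B \ L) := by
          rcases max_cases (ν (L ∩ B)) (ν (B \ L)) with ⟨h1, h2⟩ | ⟨h1, h2⟩
          · exact absurd (hmax ▸ h1 ▸ lt_trans hLB hqn) (lt_irrefl _)
          · exact le_of_lt (lt_of_lt_of_le hqn (le_of_eq (hmax.trans h1)))
        obtain ⟨A', hA'sub, hA'⟩ := exists_atom hm hca (hq n) (hB.diff hLm) hBL
        have hA'disj : ∀ D ∈ 𝓓 n, Disjoint A' D := by
          intro D hD
          apply Set.disjoint_left.2
          intro x hx hxD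
          exact (hA'sub hx).2 ⟨D, hD, hxD⟩
        have hA'mem : A' ∈ 𝓓 n := (h𝓓 n).2.2 A' hA' hA'disj
        have : A' = ∅ := by
          ext x
          simp only [Set.mem_empty_iff_false, iff_false]
          intro hx
          exact (hA'sub hx).2 ⟨A', hA'mem, hx⟩
        rw [this] at hA'
        exact absurd (lt_of_lt_of_le (hq n) (hm.1 ▸ hA'.2.1)) (lt_irrefl _)
      obtain ⟨A, hA𝓓, hAB⟩ := hkey
      have hterm : 0 < μ ⟨n, ⟨A, hA𝓓⟩⟩ B := by
        rw [hμapply _ hB]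
        simp only [if_pos hAB, mul_one]
        exact hw _
      exact lt_of_lt_of_le hterm (ENNReal.le_tsum _)
    · -- m B > 0 → ν B > 0
      intro hmB
      by_contra hν0
      push_neg at hν0
      have hν0' : ν B = 0 := le_antisymm (by simpa using hν0) (zero_le)
      have : ∀ i, μ i B = 0 := by
        intro i
        rw [hμapply i hB, if_neg, mul_zero]
        intro hq'
        have hle : ν ((i.2 : Set E) ∩ B) ≤ ν B :=
          hm.mono (((h𝓓 i.1).1 i.2.1 i.2.2).1.inter hB) hB Set.inter_subset_right
        exact absurd (lt_of_lt_of_le (hq i.1) (le_trans hq' (hle.trans (le_of_eq hν0'))))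
          (by simp)
      rw [ENNReal.tsum_eq_zero.2 this] at hmB
      exact absurd hmB (lt_irrefl _)

end Ess

section SAC
variable [MeasurableSpace E] {ν : Set E → ℝ≥0∞}

/-- Rational scale embedded in `ℝ≥0∞`. -/
noncomputable def ratScale (q : ℚ) : ℝ≥0∞ := ((q : ℝ).toNNReal : ℝ≥0∞)

theorem optimal_strongAbsCont (hν : Optimal ν) : StrongAbsCont ν ν := by
  classical
  obtain ⟨hm, hcb, hca⟩ := hν
  have hSP := optimal_sigmaPrincipal ⟨hm, hcb, hca⟩
  set Q : ℚ → ℝ≥0∞ := ratScale with hQdef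
  set Iq : ℚ → Set (Set E) := fun q => {C | MeasurableSet C ∧ ν C < Q q} with hIqdef
  have hIq : ∀ q : ℚ, 0 < Q q → SigmaIdeal (Iq q) := by
    intro q hq
    refine ⟨⟨∅, MeasurableSet.empty, by rw [hm.1]; exact hq⟩,
      fun S hS => hS.1, ?_, fun B S hBm hS hBS => ⟨hBm, lt_of_le_of_lt
        (hm.mono hBm hS.1 hBS) hS.2⟩⟩
    intro f hf
    refine ⟨MeasurableSet.iUnion fun n => (hf n).1, ?_⟩
    rcases eq_or_lt_of_le ((zero_le : (0:ℝ≥0∞) ≤ ν (⋃ n, f n))) with h0 | h0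
    · rw [← h0]; exact hq
    · obtain ⟨i, hi⟩ := nu_attain hm hca f (fun n => (hf n).1) h0
      exact lt_of_le_of_lt hi (hf i).2
  set L0 : ℚ → Set E :=
    fun q => if h : 0 < Q q then (hSP (Iq q) (hIq q h)).choose else ∅ with hL0def
  have hL0spec : ∀ q : ℚ, 0 < Q q →
      L0 q ∈ Iq q ∧ ∀ S ∈ Iq q, Negligible ν (S \ L0 q) := by
    intro q hq
    have : L0 q = (hSP (Iq q) (hIq q hq)).choose := by simp only [hL0def, dif_pos hq]
    rw [this]
    exact (hSP (Iq q) (hIq q hq)).choose_spec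
  have hL0m : ∀ q : ℚ, MeasurableSet (L0 q) := by
    intro q
    by_cases hq : 0 < Q q
    · exact ((hL0spec q hq).1).1
    · simp only [hL0def, dif_neg hq]; exact MeasurableSet.empty
  set L' : ℚ → Set E :=
    fun q => ⋃ r : ℚ, if 0 < Q r ∧ Q r ≤ Q q then L0 r else ∅ with hL'def
  have hL'm : ∀ q : ℚ, MeasurableSet (L' q) :=
    fun q => MeasurableSet.iUnion fun r => by
      split
      · exact hL0m r
      · exact MeasurableSet.empty
  have hL'mono : ∀ {r q : ℚ}, Q r ≤ Q q → L' r ⊆ L' q := by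
    intro r q hrq x hx
    rcases Set.mem_iUnion.1 hx with ⟨s, hs⟩
    by_cases hcond : 0 < Q s ∧ Q s ≤ Q r
    · rw [if_pos hcond] at hs
      exact Set.mem_iUnion.2 ⟨s, by rw [if_pos ⟨hcond.1, le_trans hcond.2 hrq⟩]; exact hs⟩
    · rw [if_neg hcond] at hs
      exact absurd hs (Set.notMem_empty x)
  have hL0sub : ∀ q : ℚ, 0 < Q q → L0 q ⊆ L' q := by
    intro q hq x hx
    exact Set.mem_iUnion.2 ⟨q, by rw [if_pos ⟨hq, le_refl _⟩]; exact hx⟩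
  have hL'lt : ∀ q : ℚ, 0 < Q q → ν (L' q) < Q q := by
    intro q hq
    set e : ℕ → ℚ := fun n => (Denumerable.eqv ℚ).symm n with hedef
    have hesurj : Function.Surjective e := fun r => ⟨Denumerable.eqv ℚ r, by simp [hedef]⟩
    have hcomp : ∀ r : ℚ, MeasurableSet (if 0 < Q r ∧ Q r ≤ Q q then L0 r else ∅) := by
      intro r; split
      · exact hL0m r
      · exact MeasurableSet.empty
    have hcompv : ∀ r : ℚ, ν (if 0 < Q r ∧ Q r ≤ Q q then L0 r else ∅) < Q q := by
      intro r
      split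
      · next h => exact lt_of_lt_of_le ((hL0spec r h.1).1).2 h.2
      · rw [hm.1]; exact hq
    have hre : L' q = ⋃ n : ℕ, (if 0 < Q (e n) ∧ Q (e n) ≤ Q q then L0 (e n) else ∅) := by
      ext x
      simp only [hL'def, Set.mem_iUnion]
      constructor
      · rintro ⟨r, hr⟩
        obtain ⟨n, hn⟩ := hesurj r
        exact ⟨n, by rw [hn]; exact hr⟩
      · rintro ⟨n, hn⟩
        exact ⟨e n, hn⟩
    rw [hre]
    rcases eq_or_lt_of_le ((zero_le : (0:ℝ≥0∞) ≤ ν (⋃ n : ℕ, (if 0 < Q (e n) ∧ Q (e n) ≤ Q q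
        then L0 (e n) else ∅)))) with h0 | h0
    · rw [← h0]; exact hq
    · obtain ⟨i, hi⟩ := nu_attain hm hca _ (fun n => hcomp (e n)) h0
      exact lt_of_le_of_lt hi (hcompv (e i))
  -- the density
  set f : E → ℝ≥0∞ := fun x => ⨅ (r : ℚ) (_ : 0 < Q r ∧ x ∈ L' r), Q r with hfdef
  have hfle : ∀ (x : E) (t : ℝ≥0∞), f x ≤ t ↔ ∀ r : ℚ, t < Q r → x ∈ L' r := by
    intro x t
    constructor
    · intro hft r htr
      have hlt : f x < Q r := lt_of_le_of_lt hft htr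
      rw [hfdef] at hlt
      simp only [iInf_lt_iff] at hlt
      obtain ⟨s, hs, hsr⟩ := hlt
      exact hL'mono (le_of_lt hsr) hs.2
    · intro h
      by_contra hft
      push_neg at hft
      obtain ⟨r, _, htr, hrf⟩ := ENNReal.lt_iff_exists_rat_btwn.1 hft
      have hr0 : 0 < Q r := lt_of_le_of_lt (zero_le : (0:ℝ≥0∞) ≤ t) htr
      have hxr : x ∈ L' r := h r htr
      have : f x ≤ Q r := by
        exact iInf_le_of_le r (iInf_le _ ⟨hr0, hxr⟩)
      exact absurd (lt_of_lt_of_le hrf this) (lt_irrefl _)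
  have hfmeas : Premeasurable f := by
    intro t
    have hset : {x | f x ≤ t} = ⋂ r : ℚ, (if t < Q r then L' r else Set.univ) := by
      ext x
      simp only [Set.mem_setOf_eq, Set.mem_iInter]
      rw [hfle x t]
      constructor
      · intro h r
        split
        · next hc => exact h r hc
        · exact Set.mem_univ x
      · intro h r htr
        have := h r
        rw [if_pos htr] at this
        exact this
    have hmeas : MeasurableSet {x | f x ≤ t} := by
      rw [hset]
      exact MeasurableSet.iInter fun r => by
        split
        · exact hL'm r
        · exact MeasurableSet.univ
    have : {x | t < f x} = {x | f x ≤ t}ᶜ := by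
      ext x; simp [not_le]
    rw [this]
    exact hmeas.compl
  refine ⟨f, hfmeas, ?_⟩
  intro B hB
  apply le_antisymm
  · -- ν B ≤ essSupOn
    apply le_sInf
    rintro t ⟨ht, N, hNm, hsub, hN0⟩
    by_contra hc
    push_neg at hc
    obtain ⟨r, _, htr, hrB⟩ := ENNReal.lt_iff_exists_rat_btwn.1 hc
    have hr0 : 0 < Q r := lt_of_le_of_lt (zero_le : (0:ℝ≥0∞) ≤ t) htr
    have hBsub : B ⊆ N ∪ L' r := by
      intro x hxB
      rcases le_or_gt (f x) t with hfx | hfx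
      · exact Or.inr ((hfle x t).1 hfx r htr)
      · exact Or.inl (hsub ⟨hxB, hfx⟩)
    have h1 : ν B ≤ ν (N ∪ L' r) := hm.mono hB (hNm.union (hL'm r)) hBsub
    rw [hm.2 N (L' r) hNm (hL'm r), hN0, max_eq_right (zero_le)] at h1
    exact absurd (lt_of_le_of_lt h1 (hL'lt r hr0)) (not_lt_of_gt hrB)
  · -- essSupOn ≤ ν B
    by_contra hc
    push_neg at hc
    obtain ⟨r, _, hBr, hrI⟩ := ENNReal.lt_iff_exists_rat_btwn.1 hc
    have hr0 : 0 < Q r := lt_of_le_of_lt (zero_le) hBr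
    have hBmem : B ∈ Iq r := ⟨hB, hBr⟩
    have hneg := (hL0spec r hr0).2 B hBmem
    have hsub : B ∩ {x | Q r < f x} ⊆ B \ L0 r := by
      rintro x ⟨hxB, hxf⟩
      refine ⟨hxB, fun hxL => ?_⟩
      have hxL' : x ∈ L' r := hL0sub r hr0 hxL
      have : f x ≤ Q r := by
        exact iInf_le_of_le r (iInf_le _ ⟨hr0, hxL'⟩)
      exact absurd (lt_of_lt_of_le hxf this) (lt_irrefl _)
    obtain ⟨N, hNm, hNsub, hN0⟩ := hneg
    have hmem : Q r ∈ {t : ℝ≥0∞ | 0 < t ∧ Negligible ν (B ∩ {x | t < f x})} :=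
      ⟨hr0, N, hNm, Set.Subset.trans hsub hNsub, hN0⟩
    exact absurd (lt_of_le_of_lt (sInf_le hmem) hrI) (lt_irrefl _)

end SAC

/-- Every optimal measure is essential; consequently it is σ-principal, satisfies the
countable chain condition, and is autocontinuous. -/
theorem optimal_essential [MeasurableSpace E] (ν : Set E → ℝ≥0∞) (hν : Optimal ν) :
    Essential ν ∧ SigmaPrincipal ν ∧ CCC ν ∧ StrongAbsCont ν ν :=
  ⟨optimal_essential_aux hν, optimal_sigmaPrincipal hν, optimal_ccc hν,
    optimal_strongAbsCont hν⟩
end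

section
/- Let m be a σ-additive measure on a σ-algebra 𝓑. Then: if m is finite it is σ-finite; if m is σ-finite it is σ-principal; if m is σ-principal it satisfies the countable chain condition; and if m satisfies the countable chain condition it is localizable (where the last implication may use the axiom of choice). -/
open scoped ENNReal
open Set Filter MeasureTheory

variable {E : Type*}

/-- Auxiliary: σ-finite implies σ-principal. -/
theorem aux_sigmaFinite_sigmaPrincipal [MeasurableSpace E] (m : Measure E)
    (h : ∃ B : ℕ → Set E, (∀ n, MeasurableSet (B n)) ∧ (⋃ n, B n) = Set.univ ∧
      ∀ n, m (B n) < ⊤) :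
    ∀ I : Set (Set E), SigmaIdeal I → ∃ L ∈ I, ∀ S ∈ I, m (S \ L) = 0 := by
  obtain ⟨B, hBm, hBcov, hBfin⟩ := h
  intro I hI
  obtain ⟨hne, hmeas, hun, hsub⟩ := hI
  -- weighted finite measure
  set w : ℕ → ℝ≥0∞ := fun n => (2 : ℝ≥0∞)⁻¹ ^ n * (m (B n) + 1)⁻¹ with hw
  have hw0 : ∀ n, w n ≠ 0 := by
    intro n
    refine mul_ne_zero (pow_ne_zero n (ENNReal.inv_ne_zero.mpr ENNReal.ofNat_ne_top)) ?_
    rw [ENNReal.inv_ne_zero]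
    exact (ENNReal.add_lt_top.mpr ⟨hBfin n, ENNReal.one_lt_top⟩).ne
  have hwt : ∀ n, w n ≠ ⊤ := by
    intro n
    refine ENNReal.mul_ne_top ?_ ?_
    · exact ENNReal.pow_ne_top (by simp)
    · simp [ENNReal.inv_ne_top]
  set μ : Set E → ℝ≥0∞ := fun S => ∑' n, w n * m (S ∩ B n) with hμ
  have hμbd : ∀ S, μ S ≤ 2 := by
    intro S
    have hle : ∀ n, w n * m (S ∩ B n) ≤ (2 : ℝ≥0∞)⁻¹ ^ n := by
      intro n
      have h1 : m (S ∩ B n) ≤ m (B n) + 1 :=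
        le_trans (measure_mono Set.inter_subset_right) le_self_add
      calc w n * m (S ∩ B n) = (2 : ℝ≥0∞)⁻¹ ^ n * ((m (B n) + 1)⁻¹ * m (S ∩ B n)) := by
            rw [hw, mul_assoc]
        _ ≤ (2 : ℝ≥0∞)⁻¹ ^ n * ((m (B n) + 1)⁻¹ * (m (B n) + 1)) := by
            gcongr
        _ ≤ (2 : ℝ≥0∞)⁻¹ ^ n * 1 := by
            gcongr
            exact ENNReal.inv_mul_le_one _
        _ = (2 : ℝ≥0∞)⁻¹ ^ n := mul_one _
    calc μ S ≤ ∑' n, (2 : ℝ≥0∞)⁻¹ ^ n := ENNReal.tsum_le_tsum hle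
      _ = (1 - 2⁻¹)⁻¹ := ENNReal.tsum_geometric _
      _ ≤ 2 := by norm_num [ENNReal.one_sub_inv_two]
  have hμtop : ∀ S, μ S ≠ ⊤ := fun S => ((hμbd S).trans_lt (by norm_num)).ne
  have hμmono : ∀ S T : Set E, S ⊆ T → μ S ≤ μ T := by
    intro S T hST
    exact ENNReal.tsum_le_tsum fun n =>
      mul_le_mul_right (measure_mono (Set.inter_subset_inter_left _ hST)) _
  set s : ℝ≥0∞ := ⨆ S ∈ I, μ S with hs
  have hstop : s ≠ ⊤ := by
    refine ((iSup_le fun S => iSup_le fun _ => hμbd S).trans_lt ?_).ne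
    norm_num
  -- choose a sequence approaching the supremum
  have hchoice : ∀ k : ℕ, ∃ S ∈ I, s ≤ μ S + (k : ℝ≥0∞)⁻¹ := by
    intro k
    by_cases hs0 : s = 0
    · obtain ⟨S, hS⟩ := hne
      exact ⟨S, hS, by simp [hs0]⟩
    · have hk0 : (k : ℝ≥0∞)⁻¹ ≠ 0 := ENNReal.inv_ne_zero.mpr (ENNReal.natCast_ne_top k)
      have hlt : s - (k : ℝ≥0∞)⁻¹ < s := ENNReal.sub_lt_self hstop hs0 hk0
      rw [hs] at hlt
      simp only [lt_iSup_iff] at hlt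
      obtain ⟨S, hSI, hS⟩ := hlt
      refine ⟨S, hSI, ?_⟩
      exact tsub_le_iff_right.mp hS.le
  choose T hTI hTs using hchoice
  refine ⟨⋃ k, T k, hun T hTI, ?_⟩
  set L : Set E := ⋃ k, T k with hL
  have hLI : L ∈ I := hun T hTI
  have hLmeas : MeasurableSet L := hmeas L hLI
  have hμLs : μ L = s := by
    refine le_antisymm (le_iSup₂_of_le L hLI le_rfl) ?_
    refine ENNReal.le_of_forall_pos_le_add fun ε hε _ => ?_
    obtain ⟨k, hk⟩ := ENNReal.exists_inv_nat_lt
      (show (ε : ℝ≥0∞) ≠ 0 by exact_mod_cast hε.ne')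
    calc s ≤ μ (T k) + (k : ℝ≥0∞)⁻¹ := hTs k
      _ ≤ μ L + ε := add_le_add (hμmono _ _ (Set.subset_iUnion T k)) hk.le
  intro S hSI
  have hLSI : L ∪ S ∈ I := by
    have := hun (fun k => if k = 0 then L else S) (by
      intro k
      by_cases hk : k = 0 <;> simp [hk, hLI, hSI])
    convert this using 1
    ext x
    simp only [Set.mem_union, Set.mem_iUnion]
    constructor
    · rintro (hx | hx)
      · exact ⟨0, by simpa using hx⟩
      · exact ⟨1, by simpa using hx⟩
    · rintro ⟨k, hk⟩
      by_cases h0 : k = 0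
      · left; simpa [h0] using hk
      · right; simpa [h0] using hk
  have hμLS : μ (L ∪ S) ≤ μ L := by
    rw [hμLs]
    exact le_iSup₂_of_le (L ∪ S) hLSI le_rfl
  -- termwise equality
  have hterm : ∀ n, m ((L ∪ S) ∩ B n) = m (L ∩ B n) := by
    intro n
    refine le_antisymm ?_ (measure_mono (Set.inter_subset_inter_left _ Set.subset_union_left))
    by_contra hlt
    push_neg at hlt
    have h1 : w n * m (L ∩ B n) < w n * m ((L ∪ S) ∩ B n) :=
      (ENNReal.mul_lt_mul_iff_right (hw0 n) (hwt n)).mpr hlt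
    have h2 : μ L < μ (L ∪ S) :=
      ENNReal.tsum_lt_tsum (hμtop L)
        (fun a => mul_le_mul_right
          (measure_mono (Set.inter_subset_inter_left _ Set.subset_union_left)) _) h1
    exact absurd hμLS (not_le.mpr h2)
  have hzero : ∀ n, m ((S \ L) ∩ B n) = 0 := by
    intro n
    have hsub' : (S \ L) ∩ B n ⊆ ((L ∪ S) ∩ B n) \ (L ∩ B n) := by
      rintro x ⟨⟨hxS, hxL⟩, hxB⟩
      exact ⟨⟨Or.inr hxS, hxB⟩, fun h => hxL h.1⟩
    refine le_antisymm ?_ (zero_le)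
    calc m ((S \ L) ∩ B n) ≤ m (((L ∪ S) ∩ B n) \ (L ∩ B n)) := measure_mono hsub'
      _ = m ((L ∪ S) ∩ B n) - m (L ∩ B n) := by
          refine measure_diff (Set.inter_subset_inter_left _ Set.subset_union_left)
            ((hLmeas.inter (hBm n)).nullMeasurableSet) ?_
          exact ((measure_mono Set.inter_subset_right).trans_lt (hBfin n)).ne
      _ = 0 := by rw [hterm n, tsub_self]
  have hcov : S \ L ⊆ ⋃ n, (S \ L) ∩ B n := by
    intro x hx
    have : x ∈ ⋃ n, B n := by rw [hBcov]; trivial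
    obtain ⟨n, hn⟩ := Set.mem_iUnion.mp this
    exact Set.mem_iUnion.mpr ⟨n, hx, hn⟩
  refine le_antisymm ?_ (zero_le)
  calc m (S \ L) ≤ m (⋃ n, (S \ L) ∩ B n) := measure_mono hcov
    _ ≤ ∑' n, m ((S \ L) ∩ B n) := measure_iUnion_le _
    _ = 0 := by simp [hzero]

/-- For a σ-additive measure `m`: finite implies σ-finite, σ-finite implies σ-principal,
σ-principal implies the countable chain condition, and CCC implies localizable. -/
theorem measure_finite_sigmaFinite_sigmaPrincipal_ccc_localizable [MeasurableSpace E]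
    (m : Measure E) :
    (m Set.univ < ⊤ →
      ∃ B : ℕ → Set E, (∀ n, MeasurableSet (B n)) ∧ (⋃ n, B n) = Set.univ ∧
        ∀ n, m (B n) < ⊤) ∧
    ((∃ B : ℕ → Set E, (∀ n, MeasurableSet (B n)) ∧ (⋃ n, B n) = Set.univ ∧
        ∀ n, m (B n) < ⊤) →
      ∀ I : Set (Set E), SigmaIdeal I → ∃ L ∈ I, ∀ S ∈ I, m (S \ L) = 0) ∧
    ((∀ I : Set (Set E), SigmaIdeal I → ∃ L ∈ I, ∀ S ∈ I, m (S \ L) = 0) →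
      ∀ 𝓐 : Set (Set E), (∀ A ∈ 𝓐, MeasurableSet A ∧ 0 < m A) →
        𝓐.Pairwise Disjoint → 𝓐.Countable) ∧
    ((∀ 𝓐 : Set (Set E), (∀ A ∈ 𝓐, MeasurableSet A ∧ 0 < m A) →
        𝓐.Pairwise Disjoint → 𝓐.Countable) →
      ∀ I : Set (Set E), SigmaIdeal I → ∃ L : Set E, MeasurableSet L ∧
        (∀ S ∈ I, m (S \ L) = 0) ∧
        ∀ B : Set E, MeasurableSet B → (∀ S ∈ I, m (S \ B) = 0) → m (L \ B) = 0) := by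
  refine ⟨?_, ?_, ?_, ?_⟩
  · -- finite → σ-finite
    intro h
    exact ⟨fun _ => Set.univ, fun _ => MeasurableSet.univ, Set.iUnion_const _, fun _ => h⟩
  · -- σ-finite → σ-principal
    exact aux_sigmaFinite_sigmaPrincipal m
  · -- σ-principal → CCC
    intro hp 𝓐 hpos hdisj
    set I : Set (Set E) :=
      {B | MeasurableSet B ∧ ∃ 𝓒, 𝓒 ⊆ 𝓐 ∧ 𝓒.Countable ∧ B ⊆ ⋃₀ 𝓒} with hIdef
    have hI : SigmaIdeal I := by
      refine ⟨⟨∅, MeasurableSet.empty, ∅, Set.empty_subset _, Set.countable_empty, by simp⟩,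
        fun S hS => hS.1, ?_, ?_⟩
      · intro f hf
        choose 𝓒 h1 h2 h3 using fun n => (hf n).2
        refine ⟨MeasurableSet.iUnion fun n => (hf n).1, ⋃ n, 𝓒 n,
          Set.iUnion_subset h1, Set.countable_iUnion h2, Set.iUnion_subset fun n => ?_⟩
        exact (h3 n).trans (Set.sUnion_subset_sUnion (Set.subset_iUnion 𝓒 n))
      · intro B S hB hS hBS
        obtain ⟨_, 𝓒, hc1, hc2, hc3⟩ := hS
        exact ⟨hB, 𝓒, hc1, hc2, hBS.trans hc3⟩
    obtain ⟨L, hL, hLmax⟩ := hp I hI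
    obtain ⟨_, 𝓒₀, h𝓒₀A, h𝓒₀c, hL𝓒₀⟩ := hL
    refine h𝓒₀c.mono fun A hA => ?_
    by_contra hA𝓒
    have hAI : A ∈ I :=
      ⟨(hpos A hA).1, {A}, Set.singleton_subset_iff.mpr hA, Set.countable_singleton _, by simp⟩
    have h0 := hLmax A hAI
    have hAsub : A ⊆ A \ L := by
      intro x hx
      refine ⟨hx, fun hxL => ?_⟩
      obtain ⟨C, hC, hxC⟩ := hL𝓒₀ hxL
      have hne' : A ≠ C := fun h => hA𝓒 (h ▸ hC)
      exact Set.disjoint_left.mp (hdisj hA (h𝓒₀A hC) hne') hx hxC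
    have : m A = 0 := le_antisymm ((measure_mono hAsub).trans_eq h0) (zero_le)
    exact absurd this (hpos A hA).2.ne'
  · -- CCC → localizable
    intro hccc I hI
    obtain ⟨hne, hmeas, hun, hsub⟩ := hI
    have hempty : ∅ ∈ I := by
      obtain ⟨S, hS⟩ := hne
      exact hsub ∅ S MeasurableSet.empty hS (Set.empty_subset _)
    set P : Set (Set (Set E)) :=
      {𝓐 | 𝓐 ⊆ I ∧ (∀ A ∈ 𝓐, 0 < m A) ∧ 𝓐.Pairwise Disjoint} with hP
    obtain ⟨𝓐, h𝓐⟩ := zorn_subset P (by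
      intro c hc hchain
      refine ⟨⋃₀ c, ⟨?_, ?_, ?_⟩, fun s hs => Set.subset_sUnion_of_mem hs⟩
      · rintro A ⟨𝓑, h𝓑, hA⟩
        exact (hc h𝓑).1 hA
      · rintro A ⟨𝓑, h𝓑, hA⟩
        exact (hc h𝓑).2.1 A hA
      · rintro A ⟨𝓑₁, h𝓑₁, hA⟩ A' ⟨𝓑₂, h𝓑₂, hA'⟩ hAA'
        rcases hchain.total h𝓑₁ h𝓑₂ with h | h
        · exact (hc h𝓑₂).2.2 (h hA) hA' hAA'
        · exact (hc h𝓑₁).2.2 hA (h hA') hAA')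
    have h𝓐P : 𝓐 ∈ P := h𝓐.prop
    have hc : 𝓐.Countable :=
      hccc 𝓐 (fun A hA => ⟨hmeas A (h𝓐P.1 hA), h𝓐P.2.1 A hA⟩) h𝓐P.2.2
    obtain ⟨f, hf⟩ := (hc.insert ∅).exists_eq_range (Set.insert_nonempty _ _)
    have hfI : ∀ n, f n ∈ I := by
      intro n
      have : f n ∈ insert ∅ 𝓐 := hf ▸ Set.mem_range_self n
      rcases this with h | h
      · exact h ▸ hempty
      · exact h𝓐P.1 h
    set L : Set E := ⋃ n, f n with hLdef
    have hLI : L ∈ I := hun f hfI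
    have hLmeas : MeasurableSet L := hmeas L hLI
    have h𝓐L : ∀ A ∈ 𝓐, A ⊆ L := by
      intro A hA
      have : A ∈ Set.range f := hf ▸ Set.mem_insert_of_mem _ hA
      obtain ⟨n, hn⟩ := this
      exact hn ▸ Set.subset_iUnion f n
    refine ⟨L, hLmeas, ?_, fun B _ hB => hB L hLI⟩
    intro S hSI
    by_contra hSL
    have hpos : 0 < m (S \ L) := pos_iff_ne_zero.mpr hSL
    have hSLI : S \ L ∈ I :=
      hsub (S \ L) S ((hmeas S hSI).diff hLmeas) hSI Set.diff_subset
    have hnotmem : S \ L ∉ 𝓐 := by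
      intro hmem
      have : S \ L ⊆ L := h𝓐L _ hmem
      have : S \ L = ∅ := Set.disjoint_sdiff_left.eq_bot_of_le this
      rw [this] at hpos
      simp at hpos
    have hP' : insert (S \ L) 𝓐 ∈ P := by
      refine ⟨Set.insert_subset hSLI h𝓐P.1, ?_, ?_⟩
      · rintro A (rfl | hA)
        · exact hpos
        · exact h𝓐P.2.1 A hA
      · refine h𝓐P.2.2.insert fun A hA _ => ?_
        have hd : Disjoint (S \ L) A :=
          (Set.disjoint_sdiff_left.mono_right (h𝓐L A hA))
        exact ⟨hd, hd.symm⟩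
    exact hnotmem (h𝓐.2 hP' (Set.subset_insert _ _) (Set.mem_insert _ _))
end
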